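/- Greedy matching is 2-approximate: if $M$ is the matching output by the greedy algorithm (edges processed in decreasing weight order, added when both endpoints are unmatched) and $M^*$ is any matching in the same weighted graph, then $W(M^*) \le 2 W(M)$. -/

import Mathlib

/-- Two edges (server, job) are compatible if they share no endpoint. -/
def compatEdge (e f : ℕ × ℕ) : Bool := (e.1 != f.1) && (e.2 != f.2)

/-- Greedy matching: scan the edges in the given order (assumed sorted by
decreasing weight), keeping an edge iff it is compatible with all kept edges. -/
def greedyAux : List (ℕ × ℕ) → List (ℕ × ℕ) → List (ℕ × ℕ)
  | acc, [] => acc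
  | acc, e :: es =>
      if acc.all (compatEdge e) then greedyAux (e :: acc) es else greedyAux acc es

def greedyMatch (l : List (ℕ × ℕ)) : List (ℕ × ℕ) := greedyAux [] l

/-- A set of edges is a matching if distinct edges share no endpoint. -/
def IsMatching (M : Finset (ℕ × ℕ)) : Prop :=
  ∀ e ∈ M, ∀ f ∈ M, e ≠ f → e.1 ≠ f.1 ∧ e.2 ≠ f.2

theorem compat_self (e : ℕ × ℕ) : compatEdge e e = false := by simp [compatEdge]

theorem compat_false_iff (e g : ℕ × ℕ) :
    compatEdge e g = false ↔ e.1 = g.1 ∨ e.2 = g.2 := by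
  simp only [compatEdge, Bool.and_eq_false_iff, bne_eq_false_iff_eq, bne, Bool.not_eq_false', beq_iff_eq]

theorem mem_greedyAux_acc : ∀ (l acc : List (ℕ × ℕ)), ∀ a ∈ acc, a ∈ greedyAux acc l
  | [], _, _, ha => ha
  | e :: es, acc, a, ha => by
    unfold greedyAux
    split
    · exact mem_greedyAux_acc es _ a (List.mem_cons_of_mem _ ha)
    · exact mem_greedyAux_acc es acc a ha

theorem greedy_nodup : ∀ (l acc : List (ℕ × ℕ)), acc.Nodup → (greedyAux acc l).Nodup
  | [], _, h => h
  | e :: es, acc, h => by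
    unfold greedyAux
    split
    · rename_i htest
      apply greedy_nodup es
      refine List.nodup_cons.mpr ⟨fun hmem => ?_, h⟩
      have := List.all_eq_true.mp htest e hmem
      simp [compat_self] at this
    · exact greedy_nodup es acc h

theorem greedy_block (w : ℕ × ℕ → ℝ) :
    ∀ (l acc : List (ℕ × ℕ)), l.Pairwise (fun a b => w b ≤ w a) →
    (∀ a ∈ acc, ∀ e ∈ l, w e ≤ w a) →
    ∀ e ∈ l, ∃ g ∈ greedyAux acc l, compatEdge e g = false ∧ w e ≤ w g := by
  intro l
  induction l with
  | nil => intro acc _ _ e he; simp at he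
  | cons f es ih =>
    intro acc hsort hinv e he
    unfold greedyAux
    by_cases htest : acc.all (compatEdge f) = true
    · rw [if_pos htest]
      rcases List.mem_cons.mp he with rfl | he'
      · exact ⟨e, mem_greedyAux_acc _ _ _ (List.mem_cons_self),
          compat_self e, le_refl _⟩
      · refine ih (f :: acc) hsort.of_cons ?_ e he'
        intro a ha e' he''
        rcases List.mem_cons.mp ha with rfl | ha'
        · exact (List.pairwise_cons.mp hsort).1 e' he''
        · exact hinv a ha' e' (List.mem_cons_of_mem _ he'')
    · rw [if_neg htest]
      rcases List.mem_cons.mp he with rfl | he'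
      · simp only [List.all_eq_true] at htest
        push_neg at htest
        obtain ⟨a, ha, hca⟩ := htest
        exact ⟨a, mem_greedyAux_acc _ _ _ ha, Bool.not_eq_true _ ▸ hca,
          hinv a ha e (List.mem_cons_self)⟩
      · refine ih acc hsort.of_cons ?_ e he'
        intro a ha e' he''
        exact hinv a ha e' (List.mem_cons_of_mem _ he'')

/-- greedy matching is 2-approximate: for any matching `M*` in
the same graph, `W(M*) ≤ 2 W(M)` where `M` is the greedy matching. -/
theorem stmt16 (w : ℕ × ℕ → ℝ) (hw : ∀ e, 0 ≤ w e) (l : List (ℕ × ℕ))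
    (hsort : l.Pairwise (fun a b => w b ≤ w a))
    (Mstar : Finset (ℕ × ℕ)) (hM : IsMatching Mstar) (hsub : ∀ e ∈ Mstar, e ∈ l) :
    ∑ e ∈ Mstar, w e ≤ 2 * ((greedyMatch l).map w).sum := by
  classical
  have hnd : (greedyMatch l).Nodup := greedy_nodup l [] List.nodup_nil
  have hchoice : ∀ e, ∃ g, e ∈ Mstar →
      g ∈ (greedyMatch l).toFinset ∧ compatEdge e g = false ∧ w e ≤ w g := by
    intro e
    by_cases he : e ∈ Mstar
    · obtain ⟨g, hg1, hg2, hg3⟩ := greedy_block w l [] hsort (by simp) e (hsub e he)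
      exact ⟨g, fun _ => ⟨List.mem_toFinset.mpr hg1, hg2, hg3⟩⟩
    · exact ⟨(0, 0), fun h => absurd h he⟩
  choose φ hφ using hchoice
  -- card of each fiber ≤ 2
  have hcard : ∀ g, (Mstar.filter (fun e => φ e = g)).card ≤ 2 := by
    intro g
    have := Finset.card_le_card_of_injOn (f := fun e => decide (e.1 = g.1))
      (s := Mstar.filter (fun e => φ e = g)) (t := Finset.univ)
      (fun a _ => Finset.mem_univ _) ?_
    · simpa using this
    · intro a ha b hb hab
      have hab' : (a.1 = g.1) ↔ (b.1 = g.1) := by simpa using hab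
      simp only [Finset.coe_filter, Set.mem_setOf_eq, Finset.mem_filter] at ha hb
      obtain ⟨ha1, ha2⟩ := ha
      obtain ⟨hb1, hb2⟩ := hb
      by_contra hne
      have hcon := hM a ha1 b hb1 hne
      have hca := (compat_false_iff a g).mp (ha2 ▸ (hφ a ha1).2.1)
      have hcb := (compat_false_iff b g).mp (hb2 ▸ (hφ b hb1).2.1)
      by_cases h1 : a.1 = g.1
      · exact hcon.1 (h1.trans (hab'.mp h1).symm)
      · have ha2' : a.2 = g.2 := hca.resolve_left h1
        have hb2' : b.2 = g.2 := hcb.resolve_left (fun h => h1 (hab'.mpr h))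
        exact hcon.2 (ha2'.trans hb2'.symm)
  have hsum1 : ∑ e ∈ Mstar, w e ≤ ∑ e ∈ Mstar, w (φ e) :=
    Finset.sum_le_sum fun e he => (hφ e he).2.2
  have hsum2 : ∑ e ∈ Mstar, w (φ e)
      = ∑ g ∈ (greedyMatch l).toFinset,
          ∑ e ∈ Mstar.filter (fun e => φ e = g), w (φ e) :=
    (Finset.sum_fiberwise_of_maps_to (fun e he => (hφ e he).1) _).symm
  have hsum3 : ∀ g ∈ (greedyMatch l).toFinset,
      ∑ e ∈ Mstar.filter (fun e => φ e = g), w (φ e) ≤ 2 * w g := by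
    intro g _
    have : ∑ e ∈ Mstar.filter (fun e => φ e = g), w (φ e)
        = (Mstar.filter (fun e => φ e = g)).card • w g := by
      rw [Finset.sum_congr rfl (fun e he => by
        rw [(Finset.mem_filter.mp he).2]), Finset.sum_const]
    rw [this, nsmul_eq_mul]
    have h2 : ((Mstar.filter (fun e => φ e = g)).card : ℝ) ≤ 2 := by
      exact_mod_cast hcard g
    exact mul_le_mul_of_nonneg_right h2 (hw g)
  have hlist : ((greedyMatch l).map w).sum = ∑ g ∈ (greedyMatch l).toFinset, w g := by
    rw [List.sum_toFinset _ hnd]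
  calc ∑ e ∈ Mstar, w e ≤ ∑ e ∈ Mstar, w (φ e) := hsum1
    _ = ∑ g ∈ (greedyMatch l).toFinset,
          ∑ e ∈ Mstar.filter (fun e => φ e = g), w (φ e) := hsum2
    _ ≤ ∑ g ∈ (greedyMatch l).toFinset, 2 * w g := Finset.sum_le_sum hsum3
    _ = 2 * ((greedyMatch l).map w).sum := by rw [hlist, Finset.mul_sum]
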